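/- Let ω = 1/√2 and for μ ∈ (−1,1) let φ_μ(x) = √(2(1−μ²)) · sech(√(1−μ²)·x), with standing-wave state Φ_μ = (φ_μ, iμφ_μ, −φ_μ², 0), energy E(Φ_μ) = ((1+2μ²)·√(1−μ²)/3)·∫φ₀² and charge Q(Φ_μ) = μ·√(1−μ²)·∫φ₀². Then the degenerate second-order expansion holds: lim_{λ→1} [ E(Φ_{λω}) − λω·Q(Φ_{λω}) − E(Φ_ω) + λω·Q(Φ_ω) ] / (λ−1)² = 0; that is, S_{λω}(Φ_{λω}) − S_{λω}(Φ_ω) = o((λ−1)²) as λ → 1, where S_μ = E − μQ. -/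

import Mathlib

open Real Set MeasureTheory Complex Filter Topology

/-- The ground-state soliton of the KGZ standing-wave equation. -/
noncomputable def phiSol (ω : ℝ) (x : ℝ) : ℝ :=
  Real.sqrt (2 * (1 - ω ^ 2)) * (1 / Real.cosh (Real.sqrt (1 - ω ^ 2) * x))

/-- The energy of a static state `(u,v,n,m)` of the KGZ system. -/
noncomputable def stateEnergy (c₀ : ℝ) (u v : ℝ → ℂ) (n m : ℝ → ℝ) : ℝ :=
  (1 / 2) * (∫ x : ℝ, ‖v x‖ ^ 2)
  + (1 / (4 * c₀ ^ 2)) * (∫ x : ℝ, (deriv m x) ^ 2)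
  + (1 / 2) * (∫ x : ℝ, ‖deriv u x‖ ^ 2)
  + (1 / 2) * (∫ x : ℝ, ‖u x‖ ^ 2)
  + (1 / 4) * (∫ x : ℝ, (n x) ^ 2)
  + (1 / 2) * (∫ x : ℝ, n x * ‖u x‖ ^ 2)

/-- The charge of a static state `(u,v,n,m)` of the KGZ system. -/
noncomputable def stateCharge (u v : ℝ → ℂ) : ℝ :=
  ∫ x : ℝ, ((starRingEnd ℂ) (u x) * v x).im

/-- The energy `E(Φ_μ)` of the standing-wave state `Φ_μ = (φ_μ, iμφ_μ, -φ_μ², 0)`. -/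
noncomputable def standE (c₀ μ : ℝ) : ℝ :=
  stateEnergy c₀ (fun x => ((phiSol μ x : ℝ) : ℂ))
    (fun x => Complex.I * ((μ * phiSol μ x : ℝ) : ℂ))
    (fun x => -(phiSol μ x) ^ 2) (fun _ => 0)

/-- The charge `Q(Φ_μ)` of the standing-wave state `Φ_μ = (φ_μ, iμφ_μ, -φ_μ², 0)`. -/
noncomputable def standQ (μ : ℝ) : ℝ :=
  stateCharge (fun x => ((phiSol μ x : ℝ) : ℂ))
    (fun x => Complex.I * ((μ * phiSol μ x : ℝ) : ℂ))


lemma tanh_hasDerivAt (x : ℝ) : HasDerivAt Real.tanh (1 / Real.cosh x ^ 2) x := by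
  have h := ((Real.hasDerivAt_sinh x).div (Real.hasDerivAt_cosh x)
    (ne_of_gt (Real.cosh_pos x)))
  have : (Real.cosh x * Real.cosh x - Real.sinh x * Real.sinh x) / Real.cosh x ^ 2
      = 1 / Real.cosh x ^ 2 := by
    rw [show Real.cosh x * Real.cosh x - Real.sinh x * Real.sinh x
        = Real.cosh x ^ 2 - Real.sinh x ^ 2 by ring, Real.cosh_sq_sub_sinh_sq]
  rw [this] at h
  have ht : Real.tanh = fun y => Real.sinh y / Real.cosh y :=
    funext Real.tanh_eq_sinh_div_cosh
  rw [ht]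
  exact h

lemma tanh_formula (x : ℝ) : Real.tanh x = 1 - 2 / (Real.exp (2 * x) + 1) := by
  have h1 : Real.exp (2*x) + 1 > 0 := by positivity
  have h2 : Real.exp x > 0 := Real.exp_pos x
  rw [Real.tanh_eq_sinh_div_cosh, Real.sinh_eq, Real.cosh_eq]
  have hx : Real.exp (2*x) = Real.exp x * Real.exp x := by
    rw [← Real.exp_add]; ring_nf
  have h3 : Real.exp x + Real.exp (-x) > 0 := by positivity
  field_simp
  rw [Real.exp_neg] at *
  field_simp at *
  nlinarith [hx]

lemma tendsto_tanh_atTop : Tendsto Real.tanh atTop (𝓝 1) := by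
  have : Tendsto (fun x : ℝ => 1 - 2 / (Real.exp (2*x) + 1)) atTop (𝓝 (1 - 0)) := by
    apply Tendsto.const_sub
    apply Tendsto.div_atTop tendsto_const_nhds
    exact (Real.tendsto_exp_atTop.comp (tendsto_id.const_mul_atTop two_pos)).atTop_add
      tendsto_const_nhds
  simpa using this.congr fun x => (tanh_formula x).symm

lemma tendsto_tanh_atBot : Tendsto Real.tanh atBot (𝓝 (-1)) := by
  have he : Tendsto (fun x : ℝ => Real.exp (2*x) + 1) atBot (𝓝 (0 + 1)) := by
    exact (Real.tendsto_exp_atBot.comp (tendsto_id.const_mul_atBot two_pos)).add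
      tendsto_const_nhds
  have : Tendsto (fun x : ℝ => 1 - 2 / (Real.exp (2*x) + 1)) atBot (𝓝 (1 - 2 / (0+1))) := by
    exact tendsto_const_nhds.sub (tendsto_const_nhds.div he (by norm_num))
  norm_num at this
  exact this.congr fun x => (tanh_formula x).symm

lemma ftc_line {f g : ℝ → ℝ} (hd : ∀ x, HasDerivAt g (f x) x)
    (hf : ∀ x, 0 ≤ f x) (heven : ∀ x, f (-x) = f x) {a b : ℝ}
    (hbot : Tendsto g atBot (𝓝 a)) (htop : Tendsto g atTop (𝓝 b)) :
    Integrable f ∧ ∫ x, f x = b - a := by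
  have hIoi : IntegrableOn f (Ioi 0) :=
    integrableOn_Ioi_deriv_of_nonneg' (fun x _ => hd x) (fun x _ => hf x) htop
  have hIic : IntegrableOn f (Iic 0) := by
    rw [← Measure.map_neg_eq_self (volume : Measure ℝ)]
    have m : MeasurableEmbedding fun x : ℝ => -x :=
      (Homeomorph.neg ℝ).measurableEmbedding
    rw [m.integrableOn_map_iff]
    have : (f ∘ fun x : ℝ => -x) = f := funext fun x => heven x
    rw [this]
    have : (fun x : ℝ => -x) ⁻¹' (Iic 0) = Ici 0 := by
      ext x; simp
    rw [this]
    exact Iff.mpr integrableOn_Ici_iff_integrableOn_Ioi hIoi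
  have hint : Integrable f := by
    rw [← integrableOn_univ, ← Set.Iic_union_Ioi (a := (0:ℝ))]
    exact hIic.union hIoi
  exact ⟨hint, integral_of_hasDerivAt_of_tendsto hd hint hbot htop⟩

lemma one_sub_tanh_sq (x : ℝ) : 1 - Real.tanh x ^ 2 = (1 / Real.cosh x) ^ 2 := by
  have h := Real.cosh_sq_sub_sinh_sq x
  have hc := Real.cosh_pos x
  rw [Real.tanh_eq_sinh_div_cosh]
  field_simp
  linarith

lemma tanh_comp_hasDerivAt {k : ℝ} (x : ℝ) :
    HasDerivAt (fun x => Real.tanh (k * x)) (k * (1 / Real.cosh (k*x) ^ 2)) x := by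
  have h := (tanh_hasDerivAt (k*x)).comp x ((hasDerivAt_id x).const_mul k)
  exact h.congr_deriv (by ring)

lemma tendsto_mul_atTop' {k : ℝ} (hk : 0 < k) :
    Tendsto (fun x : ℝ => k * x) atTop atTop := by
  exact (tendsto_id (α := ℝ)).const_mul_atTop hk

lemma tendsto_mul_atBot' {k : ℝ} (hk : 0 < k) :
    Tendsto (fun x : ℝ => k * x) atBot atBot := by
  exact (tendsto_id (α := ℝ)).const_mul_atBot hk

lemma integral_sech_sq {k : ℝ} (hk : 0 < k) :
    (Integrable fun x : ℝ => (1 / Real.cosh (k*x)) ^ 2) ∧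
    ∫ x : ℝ, (1 / Real.cosh (k*x)) ^ 2 = 2 / k := by
  have hd : ∀ x : ℝ, HasDerivAt (fun x => Real.tanh (k * x) / k)
      ((1 / Real.cosh (k*x)) ^ 2) x := by
    intro x
    have := (tanh_comp_hasDerivAt (k := k) x).div_const k
    refine this.congr_deriv ?_
    field_simp
  have htop : Tendsto (fun x => Real.tanh (k * x) / k) atTop (𝓝 (1 / k)) :=
    (tendsto_tanh_atTop.comp (tendsto_mul_atTop' hk)).div_const k
  have hbot : Tendsto (fun x => Real.tanh (k * x) / k) atBot (𝓝 (-1 / k)) :=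
    (tendsto_tanh_atBot.comp (tendsto_mul_atBot' hk)).div_const k
  have := ftc_line hd (fun x => by positivity) (fun x => by simp [mul_neg]) hbot htop
  refine ⟨this.1, ?_⟩
  rw [this.2]; ring

lemma integral_sech_four {k : ℝ} (hk : 0 < k) :
    (Integrable fun x : ℝ => (1 / Real.cosh (k*x)) ^ 4) ∧
    ∫ x : ℝ, (1 / Real.cosh (k*x)) ^ 4 = 4 / (3 * k) := by
  have hd : ∀ x : ℝ, HasDerivAt
      (fun x => (Real.tanh (k * x) - Real.tanh (k * x) ^ 3 / 3) / k)
      ((1 / Real.cosh (k*x)) ^ 4) x := by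
    intro x
    have h1 := tanh_comp_hasDerivAt (k := k) x
    have h2 := ((h1.pow 3).div_const 3)
    have h3 := ((h1.sub h2).div_const k)
    refine h3.congr_deriv ?_
    have hc := (Real.cosh_pos (k*x)).ne'
    push_cast
    have e : (k * (1 / Real.cosh (k*x) ^ 2)
        - 3 * Real.tanh (k*x) ^ (3-1) * (k * (1 / Real.cosh (k*x) ^ 2)) / 3) / k
        = (1 - Real.tanh (k*x) ^ 2) * (1 / Real.cosh (k*x) ^ 2) := by
      field_simp
    rw [e, one_sub_tanh_sq]
    ring
  have htop : Tendsto (fun x => (Real.tanh (k * x) - Real.tanh (k * x) ^ 3 / 3) / k)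
      atTop (𝓝 ((1 - 1 / 3) / k)) := by
    have h := tendsto_tanh_atTop.comp (tendsto_mul_atTop' hk)
    exact ((h.sub ((h.pow 3).div_const 3)).div_const k).congr (fun x => rfl) |>.mono_right
      (by norm_num)
  have hbot : Tendsto (fun x => (Real.tanh (k * x) - Real.tanh (k * x) ^ 3 / 3) / k)
      atBot (𝓝 ((-1 - (-1) ^ 3 / 3) / k)) := by
    have h := tendsto_tanh_atBot.comp (tendsto_mul_atBot' hk)
    exact ((h.sub ((h.pow 3).div_const 3)).div_const k)
  have := ftc_line hd (fun x => by positivity)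
    (fun x => by rw [mul_neg, Real.cosh_neg]) hbot htop
  refine ⟨this.1, ?_⟩
  rw [this.2]; field_simp; ring

lemma integral_sinh_div_cosh_sq {k : ℝ} (hk : 0 < k) :
    (Integrable fun x : ℝ => (Real.sinh (k*x) / Real.cosh (k*x) ^ 2) ^ 2) ∧
    ∫ x : ℝ, (Real.sinh (k*x) / Real.cosh (k*x) ^ 2) ^ 2 = 2 / (3 * k) := by
  have hd : ∀ x : ℝ, HasDerivAt (fun x => Real.tanh (k * x) ^ 3 / (3 * k))
      ((Real.sinh (k*x) / Real.cosh (k*x) ^ 2) ^ 2) x := by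
    intro x
    have h1 := tanh_comp_hasDerivAt (k := k) x
    have h2 := (h1.pow 3).div_const (3 * k)
    refine h2.congr_deriv ?_
    rw [Real.tanh_eq_sinh_div_cosh]
    have hc := (Real.cosh_pos (k*x)).ne'
    field_simp
    have hc' : Real.cosh (k*x) ^ 2 * (Real.cosh (k*x))⁻¹ ^ 2 = 1 := by
      rw [← mul_pow, mul_inv_cancel₀ hc, one_pow]
    linear_combination (Real.sinh (k*x) ^ 2 * 3) * hc'
  have htop : Tendsto (fun x => Real.tanh (k * x) ^ 3 / (3 * k))
      atTop (𝓝 (1 ^ 3 / (3 * k))) :=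
    ((tendsto_tanh_atTop.comp (tendsto_mul_atTop' hk)).pow 3).div_const (3*k)
  have hbot : Tendsto (fun x => Real.tanh (k * x) ^ 3 / (3 * k))
      atBot (𝓝 ((-1) ^ 3 / (3 * k))) :=
    ((tendsto_tanh_atBot.comp (tendsto_mul_atBot' hk)).pow 3).div_const (3*k)
  have := ftc_line hd (fun x => by positivity)
    (fun x => by rw [mul_neg, Real.sinh_neg, Real.cosh_neg, neg_div, neg_sq]) hbot htop
  refine ⟨this.1, ?_⟩
  rw [this.2]; field_simp; ring


lemma phiSol_hasDerivAt (μ x : ℝ) :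
    HasDerivAt (phiSol μ)
      (-(Real.sqrt (2*(1-μ^2)) * Real.sqrt (1-μ^2) *
        (Real.sinh (Real.sqrt (1-μ^2)*x) / Real.cosh (Real.sqrt (1-μ^2)*x)^2))) x := by
  set k := Real.sqrt (1-μ^2) with hkdef
  have h1 : HasDerivAt (fun x : ℝ => k * x) k x := by
    simpa using (hasDerivAt_id x).const_mul k
  have h2 : HasDerivAt (fun x : ℝ => Real.cosh (k*x)) (Real.sinh (k*x) * k) x :=
    (Real.hasDerivAt_cosh (k*x)).comp x h1
  have h3 := h2.inv (ne_of_gt (Real.cosh_pos _))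
  have h4 := h3.const_mul (Real.sqrt (2*(1-μ^2)))
  show HasDerivAt (fun x => Real.sqrt (2*(1-μ^2)) * (1 / Real.cosh (k * x))) _ x
  simp only [one_div]
  refine h4.congr_deriv ?_
  field_simp

lemma integral_phiSol_sq {μ : ℝ} (hμ : μ ^ 2 < 1) :
    ∫ x : ℝ, phiSol μ x ^ 2 = 4 * Real.sqrt (1 - μ^2) := by
  have h1 : (0:ℝ) < 1 - μ^2 := by linarith
  set k := Real.sqrt (1-μ^2) with hkdef
  have hk : 0 < k := Real.sqrt_pos.mpr h1
  have hk2 : k^2 = 1 - μ^2 := Real.sq_sqrt h1.le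
  have e : ∀ x : ℝ, phiSol μ x ^ 2 = (2*(1-μ^2)) * (1 / Real.cosh (k*x)) ^ 2 := by
    intro x
    rw [phiSol, mul_pow, Real.sq_sqrt (by linarith)]
  rw [integral_congr_ae (Eventually.of_forall e) (g := fun x => (2*(1-μ^2)) * (1 / Real.cosh (k*x)) ^ 2)]
  rw [integral_const_mul, (integral_sech_sq hk).2]
  field_simp
  nlinarith [hk2]

lemma integral_phiSol_four {μ : ℝ} (hμ : μ ^ 2 < 1) :
    ∫ x : ℝ, phiSol μ x ^ 4 = (16/3) * Real.sqrt (1 - μ^2) ^ 3 := by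
  have h1 : (0:ℝ) < 1 - μ^2 := by linarith
  set k := Real.sqrt (1-μ^2) with hkdef
  have hk : 0 < k := Real.sqrt_pos.mpr h1
  have hk2 : k^2 = 1 - μ^2 := Real.sq_sqrt h1.le
  have e : ∀ x : ℝ, phiSol μ x ^ 4 = (2*(1-μ^2))^2 * (1 / Real.cosh (k*x)) ^ 4 := by
    intro x
    rw [phiSol, mul_pow, show (4:ℕ) = 2*2 from rfl, pow_mul,
      Real.sq_sqrt (by positivity : (0:ℝ) ≤ 2*(1-μ^2))]
  rw [integral_congr_ae (Eventually.of_forall e)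
    (g := fun x => (2*(1-μ^2))^2 * (1 / Real.cosh (k*x)) ^ 4)]
  rw [integral_const_mul, (integral_sech_four hk).2]
  field_simp
  nlinarith [hk2, hk]


lemma standQ_eq {μ : ℝ} (hμ : μ ^ 2 < 1) :
    standQ μ = μ * Real.sqrt (1 - μ^2) * 4 := by
  rw [standQ, stateCharge]
  have e : ∀ x : ℝ, ((starRingEnd ℂ) ((phiSol μ x : ℝ) : ℂ)
      * (Complex.I * ((μ * phiSol μ x : ℝ) : ℂ))).im = μ * phiSol μ x ^ 2 := by
    intro x
    simp [Complex.conj_ofReal, Complex.mul_im, Complex.mul_re]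
    ring
  rw [integral_congr_ae (Eventually.of_forall e) (g := fun x => μ * phiSol μ x ^ 2)]
  rw [integral_const_mul, integral_phiSol_sq hμ]
  ring

lemma standE_eq (c₀ : ℝ) {μ : ℝ} (hμ : μ ^ 2 < 1) :
    standE c₀ μ = (4/3) * (1 + 2*μ^2) * Real.sqrt (1 - μ^2) := by
  have h1 : (0:ℝ) < 1 - μ^2 := by linarith
  set k := Real.sqrt (1-μ^2) with hkdef
  have hk : 0 < k := Real.sqrt_pos.mpr h1
  have hk2 : k^2 = 1 - μ^2 := Real.sq_sqrt h1.le
  rw [standE, stateEnergy]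
  have e1 : ∀ x : ℝ, ‖Complex.I * ((μ * phiSol μ x : ℝ) : ℂ)‖ ^ 2
      = μ^2 * phiSol μ x ^ 2 := by
    intro x
    rw [norm_mul, Complex.norm_I, one_mul, Complex.norm_real, Real.norm_eq_abs,
      _root_.sq_abs, mul_pow]
  have e2 : ∀ x : ℝ, deriv (fun _ : ℝ => (0:ℝ)) x ^ 2 = 0 := by
    intro x; simp
  have e3 : ∀ x : ℝ, ‖deriv (fun x => ((phiSol μ x : ℝ) : ℂ)) x‖ ^ 2
      = (2*(1-μ^2)^2) * (Real.sinh (k*x) / Real.cosh (k*x)^2) ^ 2 := by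
    intro x
    rw [((phiSol_hasDerivAt μ x).ofReal_comp).deriv, Complex.norm_real,
      Real.norm_eq_abs, _root_.sq_abs]
    rw [neg_pow, mul_pow, mul_pow, Real.sq_sqrt (by positivity : (0:ℝ) ≤ 2*(1-μ^2)),
      Real.sq_sqrt h1.le]
    ring
  have e4 : ∀ x : ℝ, ‖((phiSol μ x : ℝ) : ℂ)‖ ^ 2 = phiSol μ x ^ 2 := by
    intro x; rw [Complex.norm_real, Real.norm_eq_abs, _root_.sq_abs]
  have e5 : ∀ x : ℝ, (-(phiSol μ x) ^ 2) ^ 2 = phiSol μ x ^ 4 := by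
    intro x; ring
  have e6 : ∀ x : ℝ, (-(phiSol μ x) ^ 2) * ‖((phiSol μ x : ℝ) : ℂ)‖ ^ 2
      = -(phiSol μ x ^ 4) := by
    intro x; rw [Complex.norm_real, Real.norm_eq_abs, _root_.sq_abs]; ring
  rw [integral_congr_ae (Eventually.of_forall e1) (g := fun x => μ^2 * phiSol μ x ^ 2),
    integral_congr_ae (Eventually.of_forall e2) (g := fun _ => (0:ℝ)),
    integral_congr_ae (Eventually.of_forall e3)
      (g := fun x => (2*(1-μ^2)^2) * (Real.sinh (k*x) / Real.cosh (k*x)^2) ^ 2),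
    integral_congr_ae (Eventually.of_forall e4) (g := fun x => phiSol μ x ^ 2),
    integral_congr_ae (Eventually.of_forall e5) (g := fun x => phiSol μ x ^ 4),
    integral_congr_ae (Eventually.of_forall e6) (g := fun x => -(phiSol μ x ^ 4))]
  rw [integral_const_mul, integral_const_mul, integral_neg, integral_zero,
    integral_phiSol_sq hμ, integral_phiSol_four hμ, (integral_sinh_div_cosh_sq hk).2]
  have hknz : k ≠ 0 := hk.ne'
  rw [← hkdef]
  field_simp
  linear_combination (-32*k^2 - 16*(1-μ^2)) * hk2

/-- At the degenerate frequency `ω = 1/√2`, the energy and charge of the standing-wave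
state have the closed forms `E(Φ_μ) = ((1+2μ²)√(1-μ²)/3)∫φ₀²`,
`Q(Φ_μ) = μ√(1-μ²)∫φ₀²`, and the action difference is degenerate to second order:
`S_{λω}(Φ_{λω}) - S_{λω}(Φ_ω) = o((λ-1)²)` as `λ → 1`, where `S_μ = E - μQ`. -/
theorem degenerate_second_order_expansion (c₀ : ℝ) (hc₀ : 0 < c₀)
    (ω : ℝ) (hω : ω = 1 / Real.sqrt 2) :
    (∀ μ ∈ Ioo (-1 : ℝ) 1,
      standE c₀ μ = ((1 + 2 * μ ^ 2) * Real.sqrt (1 - μ ^ 2) / 3)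
        * (∫ x : ℝ, (phiSol 0 x) ^ 2)) ∧
    (∀ μ ∈ Ioo (-1 : ℝ) 1,
      standQ μ = μ * Real.sqrt (1 - μ ^ 2) * (∫ x : ℝ, (phiSol 0 x) ^ 2)) ∧
    Tendsto (fun lam : ℝ =>
        (standE c₀ (lam * ω) - lam * ω * standQ (lam * ω)
          - standE c₀ ω + lam * ω * standQ ω) / (lam - 1) ^ 2)
      (𝓝[≠] (1 : ℝ)) (𝓝 0) := by
  have integral_phi0 : ∫ x : ℝ, phiSol 0 x ^ 2 = 4 := by
    have h := integral_phiSol_sq (μ := 0) (by norm_num)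
    norm_num [Real.sqrt_one] at h
    exact h
  refine ⟨?_, ?_, ?_⟩
  · intro μ hμ
    have hμ2 : μ ^ 2 < 1 := by nlinarith [hμ.1, hμ.2]
    rw [standE_eq c₀ hμ2, integral_phi0]
    ring
  · intro μ hμ
    have hμ2 : μ ^ 2 < 1 := by nlinarith [hμ.1, hμ.2]
    rw [standQ_eq hμ2, integral_phi0]
  ·
    set s := Real.sqrt 2 with hsdef
    have hs0 : 0 < s := Real.sqrt_pos.mpr (by norm_num)
    have hs2 : s ^ 2 = 2 := Real.sq_sqrt (by norm_num)
    have hs1 : 1 < s := by nlinarith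
    have hω2 : ω ^ 2 = 1/2 := by rw [hω]; rw [div_pow, hs2]; norm_num
    set G : ℝ → ℝ := fun lam => s/3 *
      (((lam^2 + 2*lam - 2) * (Real.sqrt (2 - lam^2) + 1) - (lam+1) * (2-lam))
        / (Real.sqrt (2 - lam^2) + 1)^2) with hGdef
    have hGtendsto : Tendsto G (𝓝[≠] (1:ℝ)) (𝓝 0) := by
      have hcont : ContinuousAt G 1 := by
        have c1 : ContinuousAt (fun lam : ℝ => Real.sqrt (2 - lam^2)) 1 :=
          (Real.continuous_sqrt.comp (by continuity)).continuousAt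
        have c2 : ContinuousAt (fun lam : ℝ =>
            (lam^2 + 2*lam - 2) * (Real.sqrt (2 - lam^2) + 1) - (lam+1) * (2-lam)) 1 := by
          apply ContinuousAt.sub
          · exact ContinuousAt.mul (by fun_prop) (c1.add continuousAt_const)
          · fun_prop
        have c3 : ContinuousAt (fun lam : ℝ => (Real.sqrt (2 - lam^2) + 1)^2) 1 :=
          (c1.add continuousAt_const).pow 2
        have hne : ((fun lam : ℝ => (Real.sqrt (2 - lam^2) + 1)^2) 1) ≠ 0 := by
          simp only []
          norm_num [Real.sqrt_one]
        exact continuousAt_const.mul (c2.div c3 hne)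
      have hG1 : G 1 = 0 := by
        simp only [hGdef]
        norm_num [Real.sqrt_one]
      have := hcont.tendsto
      rw [hG1] at this
      exact this.mono_left nhdsWithin_le_nhds
    refine Tendsto.congr' ?_ hGtendsto
    have hmem : Ioo (0:ℝ) s ∈ 𝓝[≠] (1:ℝ) :=
      nhdsWithin_le_nhds (isOpen_Ioo.mem_nhds ⟨by norm_num, hs1⟩)
    filter_upwards [hmem, self_mem_nhdsWithin] with lam hlam hne1
    have hl0 : 0 < lam := hlam.1
    have hls : lam < s := hlam.2
    have hlam2 : lam ^ 2 < 2 := by nlinarith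
    have ha0 : 0 < Real.sqrt (2 - lam^2) := Real.sqrt_pos.mpr (by linarith)
    set a := Real.sqrt (2 - lam^2) with hadef
    have ha2 : a ^ 2 = 2 - lam^2 := Real.sq_sqrt (by linarith)
    have hμ2 : (lam * ω) ^ 2 < 1 := by rw [mul_pow, hω2]; linarith
    have hω21 : ω ^ 2 < 1 := by rw [hω2]; norm_num
    have hω' : ω = s / 2 := by
      rw [hω, div_eq_div_iff hs0.ne' (two_ne_zero)]
      nlinarith [hs2]
    have key1 : Real.sqrt (1 - (lam*ω)^2) = a * s / 2 := by
      have h : 1 - (lam*ω)^2 = (a*s/2)^2 := by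
        rw [mul_pow, hω2, div_pow, mul_pow, ha2, hs2]; ring
      rw [h, Real.sqrt_sq (by positivity)]
    have key2 : Real.sqrt (1 - ω^2) = s / 2 := by
      have h : 1 - ω^2 = (s/2)^2 := by rw [hω2, div_pow, hs2]; norm_num
      rw [h, Real.sqrt_sq (by positivity)]
    rw [standE_eq c₀ hμ2, standE_eq c₀ hω21, standQ_eq hμ2, standQ_eq hω21, key1, key2, hω']
    have hcombo : (4/3) * (1 + 2*(lam*(s/2))^2) * (a*s/2)
        - lam*(s/2) * ((lam*(s/2)) * (a*s/2) * 4)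
        - (4/3) * (1 + 2*(s/2)^2) * (s/2) + lam*(s/2) * ((s/2) * (s/2) * 4)
        = s/3 * (a^3 + 3*lam - 4) := by
      linear_combination (-(1/6)*s*a*lam^2 - (1/3)*s + (1/2)*s*lam) * hs2 + (-(s*a)/3) * ha2
    rw [hcombo]
    have hL : lam - 1 ≠ 0 := sub_ne_zero.mpr hne1
    have hA : a + 1 ≠ 0 := by positivity
    have hfrac : (a^3 + 3*lam - 4) / (lam - 1)^2
        = ((lam^2 + 2*lam - 2) * (a + 1) - (lam+1) * (2-lam)) / (a+1)^2 := by
      rw [div_eq_div_iff (pow_ne_zero 2 hL) (pow_ne_zero 2 hA)]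
      linear_combination (a^3 + 2*a^2 - a*lam^2 + 3*a - 2*lam^2 + 3*lam) * ha2
    have : G lam = s/3 * (((lam^2 + 2*lam - 2) * (a + 1) - (lam+1) * (2-lam)) / (a+1)^2) := rfl
    rw [this, ← hfrac]
    ring
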